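/- Let m ≥ n ≥ 1, let C ∈ ℝ^{m×m} and D ∈ ℝ^{n×n} be symmetric, and let P ∈ ℝ^{m×n} satisfy Pᵀ P = I_n. Then (2/(mn))·tr(C P D Pᵀ) ≤ (1/m²)·‖C‖_F² + (1/n²)·‖D‖_F². Consequently, the extended orthogonal Gromov–Wasserstein discrepancy OGW(C,D) := (1/m²)‖C‖_F² + (1/n²)‖D‖_F² − (2/(mn))·sup_{P ∈ Õ_{m,n} ∩ Ẽ} tr(C P D Pᵀ) is nonnegative, where Õ_{m,n} := {P ∈ ℝ^{m×n} : Pᵀ P = I_n} and Ẽ := {P : P·1_n = √(n/m)·1_m, Pᵀ·1_m = √(m/n)·1_n}. -/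

import Mathlib

open Matrix BigOperators

noncomputable section

def frobSq {m n : ℕ} (A : Matrix (Fin m) (Fin n) ℝ) : ℝ := ∑ i, ∑ j, (A i j) ^ 2

def OEt (m n : ℕ) : Set (Matrix (Fin m) (Fin n) ℝ) :=
  {P | Pᵀ * P = 1
    ∧ (P *ᵥ (fun _ => (1 : ℝ)) = fun _ => Real.sqrt ((n : ℝ) / (m : ℝ)))
    ∧ (Pᵀ *ᵥ (fun _ => (1 : ℝ)) = fun _ => Real.sqrt ((m : ℝ) / (n : ℝ)))}

lemma frobSq_nonneg {m n : ℕ} (A : Matrix (Fin m) (Fin n) ℝ) : 0 ≤ frobSq A :=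
  Finset.sum_nonneg fun _ _ => Finset.sum_nonneg fun _ _ => sq_nonneg _

lemma frobSq_eq_trace {m n : ℕ} (A : Matrix (Fin m) (Fin n) ℝ) :
    frobSq A = Matrix.trace (Aᵀ * A) := by
  simp [frobSq, Matrix.trace, Matrix.mul_apply, Matrix.diag, sq]
  exact Finset.sum_comm

/-- For semi-orthogonal `P`, `(2/(mn))·tr(C P D Pᵀ) ≤ (1/m²)‖C‖_F² + (1/n²)‖D‖_F²`;
consequently, the extended orthogonal Gromov-Wasserstein discrepancy is nonnegative. -/
theorem extended_OGW_nonneg (m n : ℕ) (hn : 1 ≤ n) (hmn : n ≤ m)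
    (C : Matrix (Fin m) (Fin m) ℝ) (D : Matrix (Fin n) (Fin n) ℝ)
    (hC : C.IsSymm) (hD : D.IsSymm) :
    (∀ P : Matrix (Fin m) (Fin n) ℝ, Pᵀ * P = 1 →
      (2 / ((m : ℝ) * (n : ℝ))) * Matrix.trace (C * P * D * Pᵀ)
        ≤ (1 / (m : ℝ) ^ 2) * frobSq C + (1 / (n : ℝ) ^ 2) * frobSq D)
    ∧ 0 ≤ (1 / (m : ℝ) ^ 2) * frobSq C + (1 / (n : ℝ) ^ 2) * frobSq D
        - (2 / ((m : ℝ) * (n : ℝ)))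
          * sSup ((fun P => Matrix.trace (C * P * D * Pᵀ)) '' OEt m n) := by
  have hm : (1:ℝ) ≤ m := by exact_mod_cast le_trans hn hmn
  have hm0 : (0:ℝ) < m := by linarith
  have hn0 : (0:ℝ) < n := by exact_mod_cast hn
  have key : ∀ P : Matrix (Fin m) (Fin n) ℝ, Pᵀ * P = 1 →
      (2 / ((m : ℝ) * (n : ℝ))) * Matrix.trace (C * P * D * Pᵀ)
        ≤ (1 / (m : ℝ) ^ 2) * frobSq C + (1 / (n : ℝ) ^ 2) * frobSq D := by
    intro P hP
    set Q := P * D * Pᵀ with hQdef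
    -- ‖Q‖² = ‖D‖²
    have hPP : ∀ (X : Matrix (Fin n) (Fin m) ℝ), Pᵀ * (P * X) = X := fun X => by
      rw [← Matrix.mul_assoc, hP, Matrix.one_mul]
    have hQfrob : frobSq Q = frobSq D := by
      rw [frobSq_eq_trace, frobSq_eq_trace]
      have h1 : Qᵀ * Q = P * (Dᵀ * (D * Pᵀ)) := by
        simp [hQdef, Matrix.transpose_mul, Matrix.mul_assoc, hPP]
      rw [h1, Matrix.trace_mul_comm]
      have h2 : Dᵀ * (D * Pᵀ) * P = Dᵀ * (D * (Pᵀ * P)) := by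
        simp [Matrix.mul_assoc]
      rw [h2, hP, Matrix.mul_one]
    -- cross term
    have hS : (∑ i, ∑ j, C i j * Q i j) = Matrix.trace (C * P * D * Pᵀ) := by
      have : (∑ i, ∑ j, C i j * Q i j) = Matrix.trace (Cᵀ * Q) := by
        simp [Matrix.trace, Matrix.mul_apply, Matrix.diag, Matrix.transpose_apply]
        rw [Finset.sum_comm]
      rw [this, hC.eq, hQdef, ← Matrix.mul_assoc, ← Matrix.mul_assoc]
    set a : ℝ := 1 / m
    set b : ℝ := 1 / n
    have hexp : frobSq (a • C - b • Q)
        = a^2 * frobSq C - (2*a*b) * (∑ i, ∑ j, C i j * Q i j) + b^2 * frobSq Q := by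
      simp only [frobSq, Matrix.sub_apply, Matrix.smul_apply, smul_eq_mul,
        Finset.mul_sum, ← Finset.sum_add_distrib, ← Finset.sum_sub_distrib]
      refine Finset.sum_congr rfl fun i _ => Finset.sum_congr rfl fun j _ => ?_
      ring
    have h0 := frobSq_nonneg (a • C - b • Q)
    rw [hexp, hQfrob, hS] at h0
    have ha : a^2 = 1 / (m:ℝ)^2 := by show (1/(m:ℝ))^2 = _; ring
    have hb : b^2 = 1 / (n:ℝ)^2 := by show (1/(n:ℝ))^2 = _; ring
    have hab : 2*a*b = 2 / ((m:ℝ)*(n:ℝ)) := by show 2*(1/(m:ℝ))*(1/(n:ℝ)) = _; ring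
    rw [ha, hb, hab] at h0
    linarith
  refine ⟨key, ?_⟩
  have hRHS : 0 ≤ (1 / (m : ℝ) ^ 2) * frobSq C + (1 / (n : ℝ) ^ 2) * frobSq D := by
    have := frobSq_nonneg C; have := frobSq_nonneg D
    positivity
  have hc : (0:ℝ) < 2 / ((m:ℝ)*(n:ℝ)) := by positivity
  rw [sub_nonneg, ← le_div_iff₀' hc]
  apply Real.sSup_le
  · rintro x ⟨P, hP, rfl⟩
    rw [le_div_iff₀' hc]
    exact key P hP.1
  · positivity
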